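/- Let k be a field of characteristic 0 and μ ∈ k with μ ≠ 0. Let 𝔞₀ = k (with basis element ε = 1) and 𝔞₁ = k² (with basis elements a, b). Define the bilinear operations by ε·ε = ε, ε·a = (1/2)μ a, ε·b = (1/2)μ⁻¹ b, [a,b] = (1/2)ε = −[b,a], [a,a] = [b,b] = 0, and the linear maps α = id on 𝔞₀ and β(a) = μ a, β(b) = μ⁻¹ b on 𝔞₁. Then (𝔞₀, 𝔞₁, ·, ·, [·,·], α, β) is a multiplicative Hom-Lie antialgebra. -/

import Mathlib

/-- The twisted algebra `K(1)_μ` with even part `k` (basis ε = 1), odd part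
`k × k` (basis a, b), products `ε·ε = ε`, `ε·a = (1/2)μ a`, `ε·b = (1/2)μ⁻¹ b`,
bracket `[a,b] = (1/2)ε`, and structure maps `α = id`, `β(a) = μ a`, `β(b) = μ⁻¹ b`,
is a multiplicative Hom-Lie antialgebra. -/
theorem K1_twisted_is_multiplicative_homLieAntialgebra
    (k : Type*) [Field k] [CharZero k] (μ : k) (hμ : μ ≠ 0) :
    let m0 : k → k → k := fun x1 x2 => x1 * x2
    let m1 : k → k × k → k × k :=
      fun x y => (((1:k)/2) * μ * x * y.1, ((1:k)/2) * μ⁻¹ * x * y.2)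
    let br : k × k → k × k → k := fun y1 y2 => ((1:k)/2) * (y1.1 * y2.2 - y1.2 * y2.1)
    let α : k → k := id
    let β : k × k → k × k := fun y => (μ * y.1, μ⁻¹ * y.2)
    -- symmetry and antisymmetry
    (∀ x1 x2 : k, m0 x1 x2 = m0 x2 x1) ∧
    (∀ y1 y2 : k × k, br y1 y2 = - br y2 y1) ∧
    -- (HA1)
    (∀ x1 x2 x3 : k, m0 (α x1) (m0 x2 x3) = m0 (m0 x1 x2) (α x3)) ∧
    -- (HA2)
    (∀ (x1 x2 : k) (y1 : k × k), m1 (α x1) (m1 x2 y1) = ((1:k)/2) • m1 (m0 x1 x2) (β y1)) ∧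
    -- (HA3)
    (∀ (x1 : k) (y1 y2 : k × k),
      m0 (α x1) (br y1 y2) = br (m1 x1 y1) (β y2) + br (β y1) (m1 x1 y2)) ∧
    -- (HA4)
    (∀ y1 y2 y3 : k × k,
      m1 (br y2 y3) (β y1) + m1 (br y3 y1) (β y2) + m1 (br y1 y2) (β y3) = 0) ∧
    -- multiplicativity
    (∀ x1 x2 : k, α (m0 x1 x2) = m0 (α x1) (α x2)) ∧
    (∀ (x1 : k) (y1 : k × k), β (m1 x1 y1) = m1 (α x1) (β y1)) ∧
    (∀ y1 y2 : k × k, α (br y1 y2) = br (β y1) (β y2)) := by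
  intro m0 m1 br α β
  refine ⟨fun x1 x2 => mul_comm x1 x2, fun y1 y2 => by simp [br]; ring,
    fun x1 x2 x3 => by simp [m0, α]; ring,
    fun x1 x2 y1 => by simp [m1, m0, α, β, Prod.ext_iff, smul_eq_mul]; constructor <;> ring,
    fun x1 y1 y2 => by
      simp only [m0, m1, br, α, β, id]
      have h := mul_inv_cancel₀ hμ
      field_simp
      ring,
    fun y1 y2 y3 => by simp [m1, br, β, Prod.ext_iff]; constructor <;> ring,
    fun x1 x2 => rfl,
    fun x1 y1 => by simp [m1, β, α, Prod.ext_iff]; constructor <;> ring,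
    fun y1 y2 => by simp [br, β, α]; field_simp [hμ]⟩
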